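/- Let X be a finite nonempty set, β > 0, T > 0, and let A, Q be hermitian operators on ℂ^X. Define the Keldysh covariance blocks for t,t' ∈ [0,T]: C_{−+}(t,t') = exp(−itA) (I + exp(−βQ))^{−1} exp(it'A); C_{+−}(t,t') = −exp(−itA) (I + exp(βQ))^{−1} exp(it'A); C_{++}(t,t') = 1_{t≥t'} C_{−+}(t,t') + 1_{t<t'} C_{+−}(t,t'); C_{−−}(t,t') = 1_{t≤t'} C_{−+}(t,t') + 1_{t>t'} C_{+−}(t,t'). Let |X| denote the cardinality of X. Define the decay constant α_C = max{ sup_{ρ∈{+,−}, t∈[0,T], x∈X} ∑_{σ∈{+,−}} ∫₀^T ∑_{y∈X} |(C_{ρσ}(t,t'))_{x,y}| dt', sup_{σ∈{+,−}, t'∈[0,T], y∈X} ∑_{ρ∈{+,−}} ∫₀^T ∑_{x∈X} |(C_{ρσ}(t,t'))_{x,y}| dt } and the modified decay constant α̃_C = max{ sup_{σ∈{+,−}, t'∈[0,T], y∈X} ∑_{x∈X} |(C_{+σ}(T,t'))_{x,y}|, sup_{ρ∈{+,−}, t∈[0,T], x∈X} ∑_{y∈X} |(C_{ρ−}(t,T))_{x,y}|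 }. Then α_C ≤ 2 |X| T and α̃_C ≤ |X|. -/

import Mathlib

open MeasureTheory
open scoped BigOperators Matrix ComplexOrder

noncomputable section

/-- Matrix exponential (exponential series in the algebra of matrices). -/
noncomputable def mexp {X : Type*} [Fintype X] [DecidableEq X] (M : Matrix X X ℂ) :
    Matrix X X ℂ :=
  NormedSpace.exp M

/-- The Keldysh covariance `C_{ρσ}(t,t')` for unitary time evolution (`B = 0`).
Here `true` encodes the branch `+` and `false` encodes the branch `−`. -/
noncomputable def keldyshCovU {X : Type*} [Fintype X] [DecidableEq X]
    (β : ℝ) (A Q : Matrix X X ℂ) : Bool → Bool → ℝ → ℝ → Matrix X X ℂ :=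
  fun ρ σ t t' =>
  let Cmp : ℝ → ℝ → Matrix X X ℂ := fun s s' =>
    mexp ((-Complex.I * (s : ℂ)) • A) * (1 + mexp ((-β : ℂ) • Q))⁻¹ *
      mexp ((Complex.I * (s' : ℂ)) • A)
  let Cpm : ℝ → ℝ → Matrix X X ℂ := fun s s' =>
    -(mexp ((-Complex.I * (s : ℂ)) • A) * (1 + mexp ((β : ℂ) • Q))⁻¹ *
      mexp ((Complex.I * (s' : ℂ)) • A))
  match ρ, σ with
  | false, true => Cmp t t'
  | true, false => Cpm t t'
  | true, true =>
      (if t' ≤ t then (1 : ℂ) else 0) • Cmp t t' + (if t < t' then (1 : ℂ) else 0) • Cpm t t'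
  | false, false =>
      (if t ≤ t' then (1 : ℂ) else 0) • Cmp t t' + (if t' < t then (1 : ℂ) else 0) • Cpm t t'

section aux
variable {X : Type*} [Fintype X] [DecidableEq X]

/-- row sums of squares of a unitary matrix -/
lemma row_sq_sum (P : Matrix X X ℂ) (h : P ∈ Matrix.unitaryGroup X ℂ) (x : X) :
    ∑ i, (‖P x i‖)^2 = 1 := by
  have h1 : P * Pᴴ = 1 := by
    rw [← Matrix.star_eq_conjTranspose]
    exact (Matrix.mem_unitaryGroup_iff).mp h
  have := congrFun (congrFun h1 x) x
  rw [Matrix.mul_apply, Matrix.one_apply_eq] at this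
  have h2 : ∑ i, ((‖P x i‖)^2 : ℂ) = 1 := by
    rw [← this]
    refine Finset.sum_congr rfl fun i _ => ?_
    rw [Matrix.conjTranspose_apply, Complex.star_def, Complex.mul_conj]
    norm_cast
    exact Complex.sq_norm _
  exact_mod_cast h2

lemma col_sq_sum (P : Matrix X X ℂ) (h : P ∈ Matrix.unitaryGroup X ℂ) (y : X) :
    ∑ i, (‖P i y‖)^2 = 1 := by
  have h1 : Pᴴ * P = 1 := by
    rw [← Matrix.star_eq_conjTranspose]
    exact (Matrix.mem_unitaryGroup_iff').mp h
  have := congrFun (congrFun h1 y) y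
  rw [Matrix.mul_apply, Matrix.one_apply_eq] at this
  have h2 : ∑ i, ((‖P i y‖)^2 : ℂ) = 1 := by
    rw [← this]
    refine Finset.sum_congr rfl fun i _ => ?_
    rw [Matrix.conjTranspose_apply, Complex.star_def, ← Complex.normSq_eq_conj_mul_self]
    norm_cast
    exact Complex.sq_norm _
  exact_mod_cast h2

/-- entry bound for unitary * diagonal contraction * unitary -/
lemma entry_bound (P₁ P₂ : Matrix X X ℂ)
    (h₁ : P₁ ∈ Matrix.unitaryGroup X ℂ) (h₂ : P₂ ∈ Matrix.unitaryGroup X ℂ)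
    (μ : X → ℂ) (hμ : ∀ i, ‖μ i‖ ≤ 1) (x y : X) :
    ‖(P₁ * Matrix.diagonal μ * P₂) x y‖ ≤ 1 := by
  have he : (P₁ * Matrix.diagonal μ * P₂) x y = ∑ i, (P₁ x i * μ i) * P₂ i y := by
    rw [Matrix.mul_apply]
    refine Finset.sum_congr rfl fun i _ => ?_
    rw [Matrix.mul_diagonal]
  rw [he]
  calc ‖∑ i, (P₁ x i * μ i) * P₂ i y‖
      ≤ ∑ i, ‖(P₁ x i * μ i) * P₂ i y‖ := by
        exact norm_sum_le _ _
    _ ≤ ∑ i, ‖P₁ x i‖ * ‖P₂ i y‖ := by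
        refine Finset.sum_le_sum fun i _ => ?_
        rw [norm_mul, norm_mul]
        have : ‖P₁ x i‖ * ‖μ i‖ ≤ ‖P₁ x i‖ * 1 :=
          mul_le_mul_of_nonneg_left (hμ i) (norm_nonneg _)
        nlinarith [norm_nonneg (P₂ i y), norm_nonneg (P₁ x i)]
    _ ≤ 1 := by
        have hcs := Finset.sum_mul_sq_le_sq_mul_sq Finset.univ
          (fun i => ‖P₁ x i‖) (fun i => ‖P₂ i y‖)
        rw [row_sq_sum P₁ h₁ x, col_sq_sum P₂ h₂ y, mul_one] at hcs
        have hnn : (0:ℝ) ≤ ∑ i, ‖P₁ x i‖ * ‖P₂ i y‖ :=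
          Finset.sum_nonneg fun i _ => mul_nonneg (norm_nonneg _) (norm_nonneg _)
        nlinarith

end aux

section aux2
variable {X : Type*} [Fintype X] [DecidableEq X]

open NormedSpace in
lemma mexp_mem_unitary (c : ℂ) (hc : starRingEnd ℂ c = -c) {A : Matrix X X ℂ}
    (hA : A.IsHermitian) : mexp (c • A) ∈ Matrix.unitaryGroup X ℂ := by
  rw [Matrix.mem_unitaryGroup_iff']
  have hstar : star (mexp (c • A)) = mexp (-(c • A)) := by
    rw [Matrix.star_eq_conjTranspose, mexp, mexp, ← Matrix.exp_conjTranspose]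
    congr 1
    rw [Matrix.conjTranspose_smul, hA.eq, (show star c = -c from hc), neg_smul]
  rw [hstar, mexp, mexp,
    ← Matrix.exp_add_of_commute (-(c • A)) (c • A) ((Commute.refl (c • A)).neg_left),
    neg_add_cancel, NormedSpace.exp_zero]

lemma inv_one_add_mexp (c : ℝ) {Q : Matrix X X ℂ} (hQ : Q.IsHermitian) :
    (1 + mexp ((c : ℂ) • Q))⁻¹ =
      (hQ.eigenvectorUnitary : Matrix X X ℂ) *
        Matrix.diagonal (fun i => ((1 : ℂ) + Complex.exp ((c : ℂ) * hQ.eigenvalues i))⁻¹) *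
        (star hQ.eigenvectorUnitary : Matrix X X ℂ) := by
  set W : Matrix X X ℂ := (hQ.eigenvectorUnitary : Matrix X X ℂ) with hW
  set ν : X → ℂ := fun i => (1 : ℂ) + Complex.exp ((c : ℂ) * hQ.eigenvalues i) with hνdef
  have hsmul : star W * W = 1 := Matrix.mem_unitaryGroup_iff'.mp hQ.eigenvectorUnitary.prop
  have hmuls : W * star W = 1 := Matrix.mem_unitaryGroup_iff.mp hQ.eigenvectorUnitary.prop
  have hWinv : W⁻¹ = star W := Matrix.inv_eq_left_inv hsmul
  have hUnit : IsUnit W := ⟨⟨W, star W, hmuls, hsmul⟩, rfl⟩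
  have hν : ∀ i, ν i = ((1 + Real.exp (c * hQ.eigenvalues i) : ℝ) : ℂ) := by
    intro i
    rw [hνdef]
    push_cast
    try ring
  have hνne : ∀ i, ν i ≠ 0 := by
    intro i
    rw [hν i]
    exact_mod_cast ne_of_gt (by positivity : (0:ℝ) < 1 + Real.exp (c * hQ.eigenvalues i))
  have hdiag : (c : ℂ) • Matrix.diagonal ((RCLike.ofReal ∘ hQ.eigenvalues : X → ℂ))
      = Matrix.diagonal (fun i => (c : ℂ) * hQ.eigenvalues i) := by
    rw [← Matrix.diagonal_smul]
    exact congrArg Matrix.diagonal (funext fun i => by simp [Function.comp])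
  have hspec : (c : ℂ) • Q =
      W * Matrix.diagonal (fun i => (c : ℂ) * hQ.eigenvalues i) * W⁻¹ := by
    rw [hWinv]
    conv_lhs => rw [hQ.spectral_theorem, Unitary.conjStarAlgAut_apply]
    rw [← smul_mul_assoc, ← mul_smul_comm, hdiag]
  have hd2 : NormedSpace.exp (fun i => (c : ℂ) * hQ.eigenvalues i)
      = fun i => Complex.exp ((c : ℂ) * hQ.eigenvalues i) := by
    funext i
    rw [Pi.coe_exp, ← Complex.exp_eq_exp_ℂ]
  have hexp : mexp ((c : ℂ) • Q) =
      W * Matrix.diagonal (fun i => Complex.exp ((c : ℂ) * hQ.eigenvalues i)) * star W := by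
    rw [mexp, hspec, Matrix.exp_conj W _ hUnit, Matrix.exp_diagonal, hd2, hWinv]
  have hsum : 1 + mexp ((c : ℂ) • Q) = W * Matrix.diagonal ν * star W := by
    rw [hexp]
    have h1 : (1 : Matrix X X ℂ) = W * Matrix.diagonal (fun _ : X => (1 : ℂ)) * star W := by
      rw [Matrix.diagonal_one, mul_one, hmuls]
    conv_lhs => rw [h1]
    rw [← Matrix.add_mul, ← Matrix.mul_add, ← Matrix.diagonal_add]
  refine Matrix.inv_eq_right_inv ?_
  rw [hsum]
  calc (W * Matrix.diagonal ν * star W) * (W * Matrix.diagonal (fun i => (ν i)⁻¹) * star W)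
      = W * (Matrix.diagonal ν * ((star W * W) * (Matrix.diagonal (fun i => (ν i)⁻¹) * star W))) := by
        simp only [mul_assoc]
    _ = W * ((Matrix.diagonal ν * Matrix.diagonal (fun i => (ν i)⁻¹)) * star W) := by
        rw [hsmul, one_mul, mul_assoc]
    _ = 1 := by
        rw [Matrix.diagonal_mul_diagonal]
        have : (fun i => ν i * (ν i)⁻¹) = fun _ : X => (1:ℂ) := by
          funext i
          exact mul_inv_cancel₀ (hνne i)
        rw [this, Matrix.diagonal_one, one_mul, hmuls]
end aux2

section aux3
variable {X : Type*} [Fintype X] [DecidableEq X]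

lemma core_bound (c s s' : ℝ) {A Q : Matrix X X ℂ}
    (hA : A.IsHermitian) (hQ : Q.IsHermitian) (x y : X) :
    ‖(mexp ((-Complex.I * (s : ℂ)) • A) * (1 + mexp ((c : ℂ) • Q))⁻¹ *
      mexp ((Complex.I * (s' : ℂ)) • A)) x y‖ ≤ 1 := by
  set W : Matrix X X ℂ := (hQ.eigenvectorUnitary : Matrix X X ℂ) with hW
  have hWmem : W ∈ Matrix.unitaryGroup X ℂ := hQ.eigenvectorUnitary.prop
  have hsWmem : star W ∈ Matrix.unitaryGroup X ℂ := Unitary.star_mem hWmem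
  have hU : mexp ((-Complex.I * (s : ℂ)) • A) ∈ Matrix.unitaryGroup X ℂ := by
    refine mexp_mem_unitary _ ?_ hA
    simp [map_mul, Complex.conj_ofReal]
  have hV : mexp ((Complex.I * (s' : ℂ)) • A) ∈ Matrix.unitaryGroup X ℂ := by
    refine mexp_mem_unitary _ ?_ hA
    simp [map_mul, Complex.conj_ofReal]
  set μ : X → ℂ := fun i => ((1 : ℂ) + Complex.exp ((c : ℂ) * hQ.eigenvalues i))⁻¹ with hμdef
  have hμ : ∀ i, ‖μ i‖ ≤ 1 := by
    intro i
    have hcast : (1 : ℂ) + Complex.exp ((c : ℂ) * hQ.eigenvalues i)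
        = ((1 + Real.exp (c * hQ.eigenvalues i) : ℝ) : ℂ) := by
      push_cast
      try ring
    show ‖((1 : ℂ) + Complex.exp ((c : ℂ) * hQ.eigenvalues i))⁻¹‖ ≤ 1
    rw [hcast, norm_inv, Complex.norm_real, Real.norm_eq_abs,
      abs_of_pos (by positivity : (0:ℝ) < 1 + Real.exp (c * hQ.eigenvalues i))]
    rw [inv_le_one_iff₀]
    right
    nlinarith [Real.exp_pos (c * hQ.eigenvalues i)]
  rw [inv_one_add_mexp c hQ]
  have hassoc : mexp ((-Complex.I * (s : ℂ)) • A) * (W * Matrix.diagonal μ * star W) *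
        mexp ((Complex.I * (s' : ℂ)) • A)
      = (mexp ((-Complex.I * (s : ℂ)) • A) * W) * Matrix.diagonal μ *
        (star W * mexp ((Complex.I * (s' : ℂ)) • A)) := by
    simp only [mul_assoc]
  rw [hassoc]
  exact entry_bound _ _ (mul_mem hU hWmem) (mul_mem hsWmem hV) μ hμ x y

end aux3



section aux4
variable {X : Type*} [Fintype X] [DecidableEq X]
variable (β : ℝ) (A Q : Matrix X X ℂ) (t t' : ℝ)

lemma keldyshCovU_ft : keldyshCovU β A Q false true t t' =
    mexp ((-Complex.I * (t : ℂ)) • A) * (1 + mexp ((-β : ℂ) • Q))⁻¹ *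
      mexp ((Complex.I * (t' : ℂ)) • A) := rfl

lemma keldyshCovU_tf : keldyshCovU β A Q true false t t' =
    -(mexp ((-Complex.I * (t : ℂ)) • A) * (1 + mexp ((β : ℂ) • Q))⁻¹ *
      mexp ((Complex.I * (t' : ℂ)) • A)) := rfl

lemma keldyshCovU_tt : keldyshCovU β A Q true true t t' =
    (if t' ≤ t then (1 : ℂ) else 0) • keldyshCovU β A Q false true t t' +
    (if t < t' then (1 : ℂ) else 0) • keldyshCovU β A Q true false t t' := rfl

lemma keldyshCovU_ff : keldyshCovU β A Q false false t t' =
    (if t ≤ t' then (1 : ℂ) else 0) • keldyshCovU β A Q false true t t' +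
    (if t' < t then (1 : ℂ) else 0) • keldyshCovU β A Q true false t t' := rfl

variable {β A Q} in
lemma keldysh_entry_le_one (hA : A.IsHermitian) (hQ : Q.IsHermitian)
    (ρ σ : Bool) (x y : X) :
    ‖(keldyshCovU β A Q ρ σ t t') x y‖ ≤ 1 := by
  have hmp : ‖(keldyshCovU β A Q false true t t') x y‖ ≤ 1 := by
    rw [keldyshCovU_ft]
    have h := core_bound (-β) t t' hA hQ x y
    rwa [show (((-β : ℝ) : ℂ)) = ((-β : ℂ)) by push_cast; ring] at h
  have hpm : ‖(keldyshCovU β A Q true false t t') x y‖ ≤ 1 := by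
    rw [keldyshCovU_tf]
    have h := core_bound β t t' hA hQ x y
    rwa [Matrix.neg_apply, norm_neg]
  cases ρ <;> cases σ
  · -- false false
    rw [keldyshCovU_ff]
    rcases le_or_gt t t' with h | h
    · rw [if_pos h, if_neg (not_lt.mpr h)]
      simpa using hmp
    · rw [if_neg (not_le.mpr h), if_pos h]
      simpa using hpm
  · exact hmp
  · exact hpm
  · rw [keldyshCovU_tt]
    rcases le_or_gt t' t with h | h
    · rw [if_pos h, if_neg (not_lt.mpr h)]
      simpa using hmp
    · rw [if_neg (not_le.mpr h), if_pos h]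
      simpa using hpm

end aux4

/-- Bounds on the decay constant `α_C ≤ 2|X|T` and the modified decay constant `α̃_C ≤ |X|`
for the Keldysh covariance of a unitary time evolution (`B = 0`). The bound on each
supremum is expressed pointwise; `true` encodes the branch `+`, `false` encodes `−`. -/
theorem decay_constant_bounds_keldyshCovU
    {X : Type*} [Fintype X] [DecidableEq X] [Nonempty X]
    (β T : ℝ) (hβ : 0 < β) (hT : 0 < T)
    (A Q : Matrix X X ℂ) (hA : A.IsHermitian) (hQ : Q.IsHermitian) :
    ((∀ ρ : Bool, ∀ t ∈ Set.Icc (0 : ℝ) T, ∀ x : X,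
        (∑ σ : Bool, ∫ t' in Set.Icc (0 : ℝ) T,
            ∑ y : X, ‖(keldyshCovU β A Q ρ σ t t') x y‖)
          ≤ 2 * (Fintype.card X : ℝ) * T) ∧
      (∀ σ : Bool, ∀ t' ∈ Set.Icc (0 : ℝ) T, ∀ y : X,
        (∑ ρ : Bool, ∫ t in Set.Icc (0 : ℝ) T,
            ∑ x : X, ‖(keldyshCovU β A Q ρ σ t t') x y‖)
          ≤ 2 * (Fintype.card X : ℝ) * T)) ∧
    ((∀ σ : Bool, ∀ t' ∈ Set.Icc (0 : ℝ) T, ∀ y : X,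
        (∑ x : X, ‖(keldyshCovU β A Q true σ T t') x y‖)
          ≤ (Fintype.card X : ℝ)) ∧
      (∀ ρ : Bool, ∀ t ∈ Set.Icc (0 : ℝ) T, ∀ x : X,
        (∑ y : X, ‖(keldyshCovU β A Q ρ false t T) x y‖)
          ≤ (Fintype.card X : ℝ))) := by
  have E : ∀ (ρ σ : Bool) (t t' : ℝ) (x y : X),
      ‖(keldyshCovU β A Q ρ σ t t') x y‖ ≤ 1 :=
    fun ρ σ t t' x y => keldysh_entry_le_one t t' hA hQ ρ σ x y
  have hsumy : ∀ (ρ σ : Bool) (t t' : ℝ) (x : X),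
      ∑ y : X, ‖(keldyshCovU β A Q ρ σ t t') x y‖ ≤ (Fintype.card X : ℝ) := by
    intro ρ σ t t' x
    calc ∑ y : X, ‖(keldyshCovU β A Q ρ σ t t') x y‖
        ≤ ∑ _y : X, (1 : ℝ) := Finset.sum_le_sum fun y _ => E ρ σ t t' x y
      _ = (Fintype.card X : ℝ) := by simp
  have hsumx : ∀ (ρ σ : Bool) (t t' : ℝ) (y : X),
      ∑ x : X, ‖(keldyshCovU β A Q ρ σ t t') x y‖ ≤ (Fintype.card X : ℝ) := by
    intro ρ σ t t' y
    calc ∑ x : X, ‖(keldyshCovU β A Q ρ σ t t') x y‖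
        ≤ ∑ _x : X, (1 : ℝ) := Finset.sum_le_sum fun x _ => E ρ σ t t' x y
      _ = (Fintype.card X : ℝ) := by simp
  have hInt : ∀ f : ℝ → ℝ, (∀ u, 0 ≤ f u) → (∀ u, f u ≤ (Fintype.card X : ℝ)) →
      (∫ u in Set.Icc (0 : ℝ) T, f u) ≤ (Fintype.card X : ℝ) * T := by
    intro f hf0 hf1
    have h1 := MeasureTheory.norm_setIntegral_le_of_norm_le_const (μ := volume)
      (s := Set.Icc (0 : ℝ) T) (f := f) (C := (Fintype.card X : ℝ))
      measure_Icc_lt_top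
      (fun u _ => by rw [Real.norm_eq_abs, abs_of_nonneg (hf0 u)]; exact hf1 u)
    rw [measureReal_def, Real.volume_Icc, ENNReal.toReal_ofReal (by linarith), sub_zero] at h1
    calc (∫ u in Set.Icc (0 : ℝ) T, f u) ≤ |∫ u in Set.Icc (0 : ℝ) T, f u| := le_abs_self _
      _ ≤ (Fintype.card X : ℝ) * T := by rw [← Real.norm_eq_abs]; exact h1
  refine ⟨⟨?_, ?_⟩, ?_, ?_⟩
  · intro ρ t _ x
    rw [Fintype.sum_bool]
    have b1 := hInt (fun t' => ∑ y : X, ‖(keldyshCovU β A Q ρ true t t') x y‖)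
      (fun u => Finset.sum_nonneg fun y _ => norm_nonneg _) (fun u => hsumy ρ true t u x)
    have b2 := hInt (fun t' => ∑ y : X, ‖(keldyshCovU β A Q ρ false t t') x y‖)
      (fun u => Finset.sum_nonneg fun y _ => norm_nonneg _) (fun u => hsumy ρ false t u x)
    linarith
  · intro σ t' _ y
    rw [Fintype.sum_bool]
    have b1 := hInt (fun t => ∑ x : X, ‖(keldyshCovU β A Q true σ t t') x y‖)
      (fun u => Finset.sum_nonneg fun x _ => norm_nonneg _) (fun u => hsumx true σ u t' y)
    have b2 := hInt (fun t => ∑ x : X, ‖(keldyshCovU β A Q false σ t t') x y‖)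
      (fun u => Finset.sum_nonneg fun x _ => norm_nonneg _) (fun u => hsumx false σ u t' y)
    linarith
  · intro σ t' _ y
    exact hsumx true σ T t' y
  · intro ρ t _ x
    exact hsumy ρ false t T x
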